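/- Let 𝑴 be a real symmetric positive definite M×M matrix with unique symmetric positive definite square root 𝑴^{1/2} and 𝑴^{−1/2} = (𝑴^{1/2})^{−1}, let 𝒜 be a real symmetric positive definite M×M matrix, and let U₀, F ∈ ℝ^M. Then there exists a constant C > 0, depending only on 𝑴, 𝒜, U₀ and F (in particular independent of n and τ), such that for every integer n ≥ 1 and every τ ∈ (0,1) with max{τ‖𝒜‖₂, ‖I − τ𝒜‖₂} < 1 and nτ ≤ 1, the following holds: let (U_k) be defined by U_0 = U₀ and U_k = 𝑴^{−1/2}(I + τ𝒜)^{−1}𝑴^{1/2}U_{k−1} + τ𝑴^{−1/2}(I + τ𝒜)^{−1}𝑴^{−1/2}F, let (Ũ_k) be defined by Ũ_0 = U₀ and Ũ_k = 𝑴^{−1/2}(I + τ𝒜)^{−1}𝑴^{1/2}Ũ_{k−1}, let U and Ũ be the M×(n+1) matrices with columns U_0, …, U_n and Ũ_0, …, Ũ_n, and set X = UᵀU, X̃ = ŨᵀŨ. Then ‖X − X̃‖_F² ≤ C n⁴ τ². -/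

import Mathlib

open Matrix Finset

/-- The spectral norm (operator 2-norm) of a real square matrix. -/
noncomputable def spec {M : ℕ} (A : Matrix (Fin M) (Fin M) ℝ) : ℝ :=
  ‖LinearMap.toContinuousLinearMap (Matrix.toEuclideanLin A)‖

/-- The squared Frobenius norm of a real matrix. -/
noncomputable def frobSq {m l : ℕ} (A : Matrix (Fin m) (Fin l) ℝ) : ℝ :=
  ∑ i, ∑ j, (A i j) ^ 2

/-- The squared Euclidean norm of a real vector. -/
noncomputable def vecNormSq {M : ℕ} (x : Fin M → ℝ) : ℝ := ∑ i, (x i) ^ 2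

/-- The Euclidean norm of a real vector. -/
noncomputable def vecNorm {M : ℕ} (x : Fin M → ℝ) : ℝ := Real.sqrt (∑ i, (x i) ^ 2)

/-- The M×(n+1) matrix whose columns are the vectors `v 0, …, v n`. -/
noncomputable def colMat {M n : ℕ} (v : Fin (n + 1) → Fin M → ℝ) :
    Matrix (Fin M) (Fin (n + 1)) ℝ :=
  Matrix.of fun i k => v k i

section Helpers
variable {M : ℕ}

/-- Euclidean norm via `EuclideanSpace`. -/
noncomputable def eN (x : Fin M → ℝ) : ℝ := ‖(WithLp.equiv 2 (Fin M → ℝ)).symm x‖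

lemma eN_nonneg (x : Fin M → ℝ) : 0 ≤ eN x := norm_nonneg _

lemma eN_zero : eN (0 : Fin M → ℝ) = 0 := by
  simp [eN]

lemma eN_add_le (x y : Fin M → ℝ) : eN (x + y) ≤ eN x + eN y := by
  rw [eN, WithLp.equiv_symm_apply, WithLp.toLp_add]; exact norm_add_le _ _

lemma eN_smul (c : ℝ) (x : Fin M → ℝ) : eN (c • x) = |c| * eN x := by
  rw [eN, WithLp.equiv_symm_apply, WithLp.toLp_smul, norm_smul, Real.norm_eq_abs]; rfl

lemma spec_nonneg (A : Matrix (Fin M) (Fin M) ℝ) : 0 ≤ spec A := norm_nonneg _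

lemma eN_mulVec_le (A : Matrix (Fin M) (Fin M) ℝ) (x : Fin M → ℝ) :
    eN (A *ᵥ x) ≤ spec A * eN x := by
  have h := (LinearMap.toContinuousLinearMap (Matrix.toEuclideanLin A)).le_opNorm
    ((WithLp.equiv 2 (Fin M → ℝ)).symm x)
  have happ : (LinearMap.toContinuousLinearMap (Matrix.toEuclideanLin A))
      ((WithLp.equiv 2 (Fin M → ℝ)).symm x) = (WithLp.equiv 2 (Fin M → ℝ)).symm (A *ᵥ x) := by
    rw [LinearMap.coe_toContinuousLinearMap']
    rw [WithLp.equiv_symm_apply, Matrix.toEuclideanLin_toLp, Matrix.toLin'_apply]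
  rw [happ] at h
  exact h

lemma spec_mul_le (A B : Matrix (Fin M) (Fin M) ℝ) :
    spec (A * B) ≤ spec A * spec B := by
  rw [spec]
  apply ContinuousLinearMap.opNorm_le_bound _ (mul_nonneg (spec_nonneg A) (spec_nonneg B))
  intro y
  set x := (WithLp.equiv 2 (Fin M → ℝ)) y with hx
  have hy : (WithLp.equiv 2 (Fin M → ℝ)).symm x = y := by simp [hx]
  have h1 : ‖LinearMap.toContinuousLinearMap (Matrix.toEuclideanLin (A * B)) y‖
      = eN ((A * B) *ᵥ x) := by
    rw [← hy, eN, LinearMap.coe_toContinuousLinearMap',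
      WithLp.equiv_symm_apply, Matrix.toEuclideanLin_toLp, Matrix.toLin'_apply]
  rw [h1, ← Matrix.mulVec_mulVec]
  calc eN (A *ᵥ (B *ᵥ x)) ≤ spec A * eN (B *ᵥ x) := eN_mulVec_le _ _
    _ ≤ spec A * (spec B * eN x) :=
        mul_le_mul_of_nonneg_left (eN_mulVec_le _ _) (spec_nonneg A)
    _ = spec A * spec B * ‖y‖ := by rw [← hy]; ring_nf; rfl

lemma dot_eq_inner (x y : Fin M → ℝ) :
    x ⬝ᵥ y = inner ℝ ((WithLp.equiv 2 (Fin M → ℝ)).symm x) ((WithLp.equiv 2 (Fin M → ℝ)).symm y) := by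
  simp [PiLp.inner_apply, RCLike.inner_apply, dotProduct, mul_comm]

lemma abs_dot_le (x y : Fin M → ℝ) : |x ⬝ᵥ y| ≤ eN x * eN y := by
  rw [dot_eq_inner]; exact abs_real_inner_le_norm _ _

lemma posSemidef_smul {A : Matrix (Fin M) (Fin M) ℝ} (hA : A.PosSemidef) {τ : ℝ} (hτ : 0 ≤ τ) :
    (τ • A).PosSemidef := by
  refine .of_dotProduct_mulVec_nonneg ?_ (fun x => ?_)
  · unfold Matrix.IsHermitian
    rw [Matrix.conjTranspose_smul, hA.1.eq]
    simp
  · rw [Matrix.smul_mulVec, dotProduct_smul]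
    exact mul_nonneg hτ (hA.dotProduct_mulVec_nonneg x)

lemma key_posdef {B : Matrix (Fin M) (Fin M) ℝ} (hB : B.PosSemidef) (x : Fin M → ℝ) :
    eN x ^ 2 ≤ eN x * eN ((1 + B) *ᵥ x) := by
  have h1 : x ⬝ᵥ ((1 + B) *ᵥ x) = x ⬝ᵥ x + x ⬝ᵥ (B *ᵥ x) := by
    rw [Matrix.add_mulVec, dotProduct_add, Matrix.one_mulVec]
  have h2 : (0:ℝ) ≤ x ⬝ᵥ (B *ᵥ x) := by simpa using hB.dotProduct_mulVec_nonneg x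
  have h3 : x ⬝ᵥ x = eN x ^ 2 := by
    rw [dot_eq_inner, eN, real_inner_self_eq_norm_sq]
  have h4 : x ⬝ᵥ ((1 + B) *ᵥ x) ≤ eN x * eN ((1 + B) *ᵥ x) := by
    rw [dot_eq_inner]
    exact real_inner_le_norm _ _
  linarith

lemma eN_le_of_posdef {B : Matrix (Fin M) (Fin M) ℝ} (hB : B.PosSemidef) (x : Fin M → ℝ) :
    eN x ≤ eN ((1 + B) *ᵥ x) := by
  rcases eq_or_lt_of_le (norm_nonneg ((WithLp.equiv 2 (Fin M → ℝ)).symm x)) with h | h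
  · rw [eN, ← h]; exact norm_nonneg _
  · have := key_posdef hB x
    rw [pow_two] at this
    exact le_of_mul_le_mul_left this h

lemma spec_inv_le_one {A : Matrix (Fin M) (Fin M) ℝ} (hA : A.PosDef) {τ : ℝ} (hτ : 0 < τ) :
    spec ((1 + τ • A)⁻¹) ≤ 1 := by
  have hpsd : (τ • A).PosSemidef := posSemidef_smul hA.posSemidef hτ.le
  have hpd : (1 + τ • A).PosDef := Matrix.PosDef.add_posSemidef Matrix.PosDef.one hpsd
  have hdet : IsUnit (1 + τ • A).det := (Matrix.isUnit_iff_isUnit_det _).1 hpd.isUnit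
  rw [spec]
  apply ContinuousLinearMap.opNorm_le_bound _ zero_le_one
  intro y
  set z := (WithLp.equiv 2 (Fin M → ℝ)) y with hz
  have hy : (WithLp.equiv 2 (Fin M → ℝ)).symm z = y := by simp [hz]
  have h1 : (LinearMap.toContinuousLinearMap (Matrix.toEuclideanLin (1 + τ • A)⁻¹)) y
      = (WithLp.equiv 2 (Fin M → ℝ)).symm ((1 + τ • A)⁻¹ *ᵥ z) := by
    rw [← hy, LinearMap.coe_toContinuousLinearMap',
      WithLp.equiv_symm_apply, Matrix.toEuclideanLin_toLp, Matrix.toLin'_apply]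
  rw [h1, one_mul, ← hy]
  have h2 : (1 + τ • A) *ᵥ ((1 + τ • A)⁻¹ *ᵥ z) = z := by
    rw [Matrix.mulVec_mulVec, Matrix.mul_nonsing_inv _ hdet, Matrix.one_mulVec]
  have h3 := eN_le_of_posdef hpsd ((1 + τ • A)⁻¹ *ᵥ z)
  rw [h2] at h3
  exact h3

end Helpers

set_option maxHeartbeats 1000000 in
/-- There is a constant `C > 0`, independent of `n` and `τ`, such that for all
`n ≥ 1` and `τ ∈ (0,1)` with `max{τ‖𝒜‖₂, ‖I - τ𝒜‖₂} < 1` and `nτ ≤ 1`,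
`‖X - X̃‖_F² ≤ C n⁴ τ²`, where `X = UᵀU` for the backward Euler iterates with
source term `F` and `X̃ = ŨᵀŨ` for the homogeneous (`F = 0`) iterates. -/
theorem source_vs_homogeneous {M : ℕ} (Mmat Msq A : Matrix (Fin M) (Fin M) ℝ)
    (hM : Mmat.PosDef) (hMsq : Msq.PosDef) (hsq : Msq * Msq = Mmat)
    (hA : A.PosDef) (U₀ F : Fin M → ℝ) :
    ∃ C > 0, ∀ n : ℕ, 1 ≤ n → ∀ τ : ℝ, 0 < τ → τ < 1 →
      τ * spec A < 1 → spec (1 - τ • A) < 1 → (n : ℝ) * τ ≤ 1 →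
      ∀ U Ut : ℕ → Fin M → ℝ, U 0 = U₀ → Ut 0 = U₀ →
        (∀ k : ℕ, 1 ≤ k → U k = (Msq⁻¹ * (1 + τ • A)⁻¹ * Msq).mulVec (U (k - 1)) +
          τ • (Msq⁻¹ * (1 + τ • A)⁻¹ * Msq⁻¹).mulVec F) →
        (∀ k : ℕ, 1 ≤ k → Ut k = (Msq⁻¹ * (1 + τ • A)⁻¹ * Msq).mulVec (Ut (k - 1))) →
        frobSq ((colMat fun k : Fin (n + 1) => U (k : ℕ))ᵀ *
            (colMat fun k : Fin (n + 1) => U (k : ℕ)) -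
            (colMat fun k : Fin (n + 1) => Ut (k : ℕ))ᵀ *
            (colMat fun k : Fin (n + 1) => Ut (k : ℕ))) ≤
          C * (n : ℝ) ^ 4 * τ ^ 2 := by
  set s : ℝ := spec (Msq⁻¹) with hs_def
  set c₁ : ℝ := s * eN (Msq *ᵥ U₀) with hc1_def
  set g : ℝ := s * eN F with hg_def
  have hs0 : 0 ≤ s := spec_nonneg _
  have hc10 : 0 ≤ c₁ := mul_nonneg hs0 (eN_nonneg _)
  have hg0 : 0 ≤ g := mul_nonneg hs0 (eN_nonneg _)
  set E : ℝ := s * g * (c₁ + s * g) + c₁ * (s * g) with hE_def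
  have hE0 : 0 ≤ E := by positivity
  refine ⟨4 * E ^ 2 + 1, by positivity, ?_⟩
  intro n hn τ hτ0 hτ1 _ _ hnτ U Ut hU0 hUt0 hU hUt
  set P : Matrix (Fin M) (Fin M) ℝ := (1 + τ • A)⁻¹ with hP_def
  have hPspec : spec P ≤ 1 := spec_inv_le_one hA hτ0
  have hMsqdet : IsUnit Msq.det := (Matrix.isUnit_iff_isUnit_det _).1 hMsq.isUnit
  have hinv1 : Msq⁻¹ * Msq = 1 := Matrix.nonsing_inv_mul _ hMsqdet
  have hinv2 : Msq * Msq⁻¹ = 1 := Matrix.mul_nonsing_inv _ hMsqdet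
  have hBmul : Msq * (Msq⁻¹ * P * Msq) = P * Msq := by
    rw [← Matrix.mul_assoc, ← Matrix.mul_assoc, hinv2, Matrix.one_mul]
  have hBmul2 : Msq * (Msq⁻¹ * P * Msq⁻¹) = P * Msq⁻¹ := by
    rw [← Matrix.mul_assoc, ← Matrix.mul_assoc, hinv2, Matrix.one_mul]
  set h : Fin M → ℝ := (P * Msq⁻¹) *ᵥ F with hh_def
  have hhb : eN h ≤ g := by
    calc eN h ≤ spec (P * Msq⁻¹) * eN F := eN_mulVec_le _ _
      _ ≤ spec P * s * eN F :=
          mul_le_mul_of_nonneg_right (spec_mul_le _ _) (eN_nonneg _)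
      _ ≤ 1 * s * eN F := by
          apply mul_le_mul_of_nonneg_right _ (eN_nonneg _)
          exact mul_le_mul_of_nonneg_right hPspec hs0
      _ = g := by rw [one_mul]
  -- scaled iterates
  set V : ℕ → Fin M → ℝ := fun k => Msq *ᵥ Ut k with hV_def
  set W : ℕ → Fin M → ℝ := fun k => Msq *ᵥ U k with hW_def
  have hVstep : ∀ k : ℕ, V (k + 1) = P *ᵥ V k := by
    intro k
    show Msq *ᵥ Ut (k + 1) = P *ᵥ (Msq *ᵥ Ut k)
    rw [hUt (k + 1) (Nat.le_add_left 1 k)]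
    simp only [Nat.add_sub_cancel]
    rw [Matrix.mulVec_mulVec, Matrix.mulVec_mulVec, hBmul, ← Matrix.mulVec_mulVec]
  have hWstep : ∀ k : ℕ, W (k + 1) = P *ᵥ W k + τ • h := by
    intro k
    show Msq *ᵥ U (k + 1) = P *ᵥ (Msq *ᵥ U k) + τ • h
    rw [hU (k + 1) (Nat.le_add_left 1 k)]
    simp only [Nat.add_sub_cancel]
    rw [Matrix.mulVec_add, Matrix.mulVec_smul, Matrix.mulVec_mulVec, Matrix.mulVec_mulVec,
      hBmul, hBmul2, ← Matrix.mulVec_mulVec]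
  have hVb : ∀ k : ℕ, eN (V k) ≤ eN (V 0) := by
    intro k
    induction k with
    | zero => exact le_refl _
    | succ k ih =>
        rw [hVstep k]
        calc eN (P *ᵥ V k) ≤ spec P * eN (V k) := eN_mulVec_le _ _
          _ ≤ 1 * eN (V k) := mul_le_mul_of_nonneg_right hPspec (eN_nonneg _)
          _ = eN (V k) := one_mul _
          _ ≤ eN (V 0) := ih
  have hDb : ∀ k : ℕ, eN (W k - V k) ≤ (k : ℝ) * (τ * g) := by
    intro k
    induction k with
    | zero =>
        have : W 0 - V 0 = 0 := by
          show Msq *ᵥ U 0 - Msq *ᵥ Ut 0 = 0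
          rw [hU0, hUt0, sub_self]
        rw [this, eN_zero]
        simp
    | succ k ih =>
        have hid : W (k + 1) - V (k + 1) = P *ᵥ (W k - V k) + τ • h := by
          rw [hWstep k, hVstep k, Matrix.mulVec_sub]
          abel
        rw [hid]
        calc eN (P *ᵥ (W k - V k) + τ • h)
            ≤ eN (P *ᵥ (W k - V k)) + eN (τ • h) := eN_add_le _ _
          _ ≤ spec P * eN (W k - V k) + |τ| * eN h := by
              apply add_le_add (eN_mulVec_le _ _)
              rw [eN_smul]
          _ ≤ 1 * ((k : ℝ) * (τ * g)) + τ * g := by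
              apply add_le_add
              · calc spec P * eN (W k - V k) ≤ 1 * eN (W k - V k) :=
                    mul_le_mul_of_nonneg_right hPspec (eN_nonneg _)
                  _ ≤ 1 * ((k : ℝ) * (τ * g)) := by rw [one_mul, one_mul]; exact ih
              · rw [abs_of_pos hτ0]
                exact mul_le_mul_of_nonneg_left hhb hτ0.le
          _ = ((k : ℝ) + 1) * (τ * g) := by ring
          _ = ((k + 1 : ℕ) : ℝ) * (τ * g) := by push_cast; ring
  have hUtrec : ∀ k : ℕ, Ut k = Msq⁻¹ *ᵥ V k := by
    intro k
    show Ut k = Msq⁻¹ *ᵥ (Msq *ᵥ Ut k)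
    rw [Matrix.mulVec_mulVec, hinv1, Matrix.one_mulVec]
  have hUrec : ∀ k : ℕ, U k = Msq⁻¹ *ᵥ W k := by
    intro k
    show U k = Msq⁻¹ *ᵥ (Msq *ᵥ U k)
    rw [Matrix.mulVec_mulVec, hinv1, Matrix.one_mulVec]
  have hUt_b : ∀ k : ℕ, eN (Ut k) ≤ c₁ := by
    intro k
    rw [hUtrec k]
    calc eN (Msq⁻¹ *ᵥ V k) ≤ s * eN (V k) := eN_mulVec_le _ _
      _ ≤ s * eN (V 0) := mul_le_mul_of_nonneg_left (hVb k) hs0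
      _ = c₁ := by rw [hc1_def]; congr 1; show eN (Msq *ᵥ Ut 0) = _; rw [hUt0]
  have hDiff_b : ∀ k : ℕ, eN (U k - Ut k) ≤ s * ((k : ℝ) * (τ * g)) := by
    intro k
    have hid : U k - Ut k = Msq⁻¹ *ᵥ (W k - V k) := by
      rw [Matrix.mulVec_sub, ← hUrec k, ← hUtrec k]
    rw [hid]
    calc eN (Msq⁻¹ *ᵥ (W k - V k)) ≤ s * eN (W k - V k) := eN_mulVec_le _ _
      _ ≤ s * ((k : ℝ) * (τ * g)) := mul_le_mul_of_nonneg_left (hDb k) hs0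
  have hU_b : ∀ k : ℕ, (k : ℝ) * τ ≤ 1 → eN (U k) ≤ c₁ + s * g := by
    intro k hkτ
    have h1 : U k = Ut k + (U k - Ut k) := by abel
    rw [h1]
    calc eN (Ut k + (U k - Ut k)) ≤ eN (Ut k) + eN (U k - Ut k) := eN_add_le _ _
      _ ≤ c₁ + s * ((k : ℝ) * (τ * g)) := add_le_add (hUt_b k) (hDiff_b k)
      _ ≤ c₁ + s * g := by
          have hint : (0:ℝ) ≤ s * g * (1 - (k : ℝ) * τ) :=
            mul_nonneg (mul_nonneg hs0 hg0) (by linarith)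
          linarith [hint]
  -- entrywise bound
  have hEntry : ∀ k l : ℕ, (k : ℝ) ≤ (n : ℝ) → (l : ℝ) ≤ (n : ℝ) →
      |U k ⬝ᵥ U l - Ut k ⬝ᵥ Ut l| ≤ E * ((n : ℝ) * τ) := by
    intro k l hk hl
    have hlτ : (l : ℝ) * τ ≤ 1 :=
      le_trans (mul_le_mul_of_nonneg_right hl hτ0.le) hnτ
    have hid : U k ⬝ᵥ U l - Ut k ⬝ᵥ Ut l
        = (U k - Ut k) ⬝ᵥ U l + Ut k ⬝ᵥ (U l - Ut l) := by
      rw [sub_dotProduct, dotProduct_sub]; ring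
    rw [hid]
    have t1 : |(U k - Ut k) ⬝ᵥ U l| ≤ (s * ((k : ℝ) * (τ * g))) * (c₁ + s * g) := by
      refine le_trans (abs_dot_le _ _) ?_
      exact mul_le_mul (hDiff_b k) (hU_b l hlτ) (eN_nonneg _) (by positivity)
    have t2 : |Ut k ⬝ᵥ (U l - Ut l)| ≤ c₁ * (s * ((l : ℝ) * (τ * g))) := by
      refine le_trans (abs_dot_le _ _) ?_
      exact mul_le_mul (hUt_b k) (hDiff_b l) (eN_nonneg _) hc10
    have e1 : (0:ℝ) ≤ s * g * (c₁ + s * g) * (((n : ℝ) - k) * τ) :=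
      mul_nonneg (by positivity) (mul_nonneg (by linarith) hτ0.le)
    have e2 : (0:ℝ) ≤ c₁ * (s * g) * (((n : ℝ) - l) * τ) :=
      mul_nonneg (by positivity) (mul_nonneg (by linarith) hτ0.le)
    calc |(U k - Ut k) ⬝ᵥ U l + Ut k ⬝ᵥ (U l - Ut l)|
        ≤ |(U k - Ut k) ⬝ᵥ U l| + |Ut k ⬝ᵥ (U l - Ut l)| := abs_add_le _ _
      _ ≤ (s * ((k : ℝ) * (τ * g))) * (c₁ + s * g) + c₁ * (s * ((l : ℝ) * (τ * g))) :=
          add_le_add t1 t2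
      _ ≤ E * ((n : ℝ) * τ) := by rw [hE_def]; linarith [e1, e2]
  -- matrix entries
  have hmat : ∀ k l : Fin (n + 1),
      ((colMat fun k : Fin (n + 1) => U (k : ℕ))ᵀ *
        (colMat fun k : Fin (n + 1) => U (k : ℕ)) -
        (colMat fun k : Fin (n + 1) => Ut (k : ℕ))ᵀ *
        (colMat fun k : Fin (n + 1) => Ut (k : ℕ))) k l
      = U (k : ℕ) ⬝ᵥ U (l : ℕ) - Ut (k : ℕ) ⬝ᵥ Ut (l : ℕ) := by
    intro k l
    simp [colMat, Matrix.mul_apply, Matrix.sub_apply, Matrix.transpose_apply,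
      dotProduct]
  have hcard : ∀ k : Fin (n + 1), ((k : ℕ) : ℝ) ≤ (n : ℝ) := by
    intro k
    exact_mod_cast Nat.cast_le.mpr (Fin.is_le k)
  have hterm : ∀ k l : Fin (n + 1),
      (U (k : ℕ) ⬝ᵥ U (l : ℕ) - Ut (k : ℕ) ⬝ᵥ Ut (l : ℕ)) ^ 2 ≤ (E * ((n : ℝ) * τ)) ^ 2 := by
    intro k l
    have habs := hEntry (k : ℕ) (l : ℕ) (hcard k) (hcard l)
    calc (U (k : ℕ) ⬝ᵥ U (l : ℕ) - Ut (k : ℕ) ⬝ᵥ Ut (l : ℕ)) ^ 2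
        = |U (k : ℕ) ⬝ᵥ U (l : ℕ) - Ut (k : ℕ) ⬝ᵥ Ut (l : ℕ)| ^ 2 := (sq_abs _).symm
      _ ≤ (E * ((n : ℝ) * τ)) ^ 2 := pow_le_pow_left₀ (abs_nonneg _) habs 2
  rw [frobSq]
  have hsum : ∑ k : Fin (n + 1), ∑ l : Fin (n + 1),
      (((colMat fun k : Fin (n + 1) => U (k : ℕ))ᵀ *
        (colMat fun k : Fin (n + 1) => U (k : ℕ)) -
        (colMat fun k : Fin (n + 1) => Ut (k : ℕ))ᵀ *
        (colMat fun k : Fin (n + 1) => Ut (k : ℕ))) k l) ^ 2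
      ≤ ((n : ℝ) + 1) * (((n : ℝ) + 1) * (E * ((n : ℝ) * τ)) ^ 2) := by
    calc ∑ k : Fin (n + 1), ∑ l : Fin (n + 1), _
        ≤ ∑ _k : Fin (n + 1), ∑ _l : Fin (n + 1), (E * ((n : ℝ) * τ)) ^ 2 := by
          apply Finset.sum_le_sum
          intro k _
          apply Finset.sum_le_sum
          intro l _
          rw [hmat k l]
          exact hterm k l
      _ = ((n : ℝ) + 1) * (((n : ℝ) + 1) * (E * ((n : ℝ) * τ)) ^ 2) := by
          simp [Finset.sum_const, Finset.card_univ]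
  refine le_trans hsum ?_
  have hn1 : (1 : ℝ) ≤ (n : ℝ) := by exact_mod_cast hn
  have p1 : ((n : ℝ) + 1) ^ 2 ≤ 4 * (n : ℝ) ^ 2 := by nlinarith
  have p2 : (0:ℝ) ≤ (E * ((n : ℝ) * τ)) ^ 2 := sq_nonneg _
  have p3 : (0:ℝ) ≤ (n : ℝ) ^ 4 * τ ^ 2 := by positivity
  linarith [mul_le_mul_of_nonneg_right p1 p2, p3]
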